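/- For every integer n ≥ 3 and every real α ∈ [0,1], the inequality (1/(α²n(n-1)))·(1 - (1-α)^{n-1})² ≥ (1/α²)·((1/(n-1))·(1 - (1-α)^{n-1}) - (1/n)·(1 - (1-α)^n)) holds (for α = 0 interpreted by continuity, both sides vanish appropriately). -/
import Mathlib


theorem explicit_inequality (n : ℕ) (hn : 3 ≤ n) (α : ℝ) (hα0 : 0 < α) (hα1 : α ≤ 1) :
    1 / (α ^ 2 * n * ((n : ℝ) - 1)) * (1 - (1 - α) ^ (n - 1)) ^ 2 ≥
      1 / α ^ 2 *
        (1 / ((n : ℝ) - 1) * (1 - (1 - α) ^ (n - 1)) - 1 / (n : ℝ) * (1 - (1 - α) ^ n)) := by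
  have hn1 : (1:ℕ) ≤ n := by omega
  have hβ0 : (0:ℝ) ≤ 1 - α := by linarith
  have hpow : (1-α)^n = (1-α) * (1-α)^(n-1) := by
    rw [← pow_succ']
    congr 1; omega
  have hcast : ((n-1:ℕ):ℝ) = (n:ℝ)-1 := by
    push_cast [Nat.cast_sub hn1]; ring
  have hbern : 1 + ((n:ℝ)-1) * ((1-α) - 1) ≤ (1-α)^(n-1) := by
    have h := one_add_mul_le_pow (a := (1-α)-1) (by linarith) (n-1)
    rw [hcast] at h
    calc 1 + ((n:ℝ)-1)*((1-α)-1) ≤ (1+((1-α)-1))^(n-1) := h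
    _ = (1-α)^(n-1) := by ring_nf
  have hx0 : 0 ≤ (1-α)^(n-1) := pow_nonneg hβ0 _
  have hn3 : (3:ℝ) ≤ n := by exact_mod_cast hn
  have hnpos : (0:ℝ) < n := by linarith
  have hn1pos : (0:ℝ) < (n:ℝ) - 1 := by linarith
  have hα2 : (0:ℝ) < α^2 := by positivity
  rw [hpow, ge_iff_le, ← sub_nonneg]
  have expand : 1 / (α ^ 2 * ↑n * (↑n - 1)) * (1 - (1 - α) ^ (n - 1)) ^ 2 -
      1 / α ^ 2 * (1 / (↑n - 1) * (1 - (1 - α) ^ (n - 1)) - 1 / ↑n * (1 - (1 - α) * (1 - α) ^ (n - 1)))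
      = ((1-α)^(n-1) * ((1-α)^(n-1) + ((n:ℝ)-2) - ((n:ℝ)-1)*(1-α))) / (α ^ 2 * ↑n * (↑n - 1)) := by
    field_simp
    ring
  have key : 0 ≤ (1-α)^(n-1) * ((1-α)^(n-1) + ((n:ℝ)-2) - ((n:ℝ)-1)*(1-α)) := by
    apply mul_nonneg hx0
    nlinarith
  rw [expand]
  positivity
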